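/- Let k ≥ 1 and m₀ ≥ 1 be integers, and consider a data set of m = m₀·k points partitioned into k clusters with exactly m₀ points in each cluster. If in each repeat of k-means the k initial seeds are chosen uniformly at random among all k-element subsets of the m points, and a repeat is a success exactly when each cluster contains exactly one seed, then the expected number of independent repeats until the first success equals C(m₀·k, k) / m₀^k, and this expectation is at most e^k (so the average number of repeats k-means needs to achieve the competitive performance of LDPS-means is O(e^k)). -/

import Mathlib

/-- Let `k ≥ 1`, `m₀ ≥ 1`, and let a data set `S` of `m = m₀·k` points be
partitioned into `k` clusters `B j`, each of exactly `m₀` points.  In each repeat, the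
`k` initial seeds form a uniformly random `k`-element subset of `S`; a repeat succeeds
exactly when each cluster contains exactly one seed (probability `p` = #successful
subsets / #all `k`-subsets).  The expected number of independent repeats until the first
success (geometric distribution: `∑ (n+1)·p·(1−p)ⁿ`) equals `C(m₀·k, k) / m₀^k`, and is
at most `e^k`. -/
theorem expected_repeats_eq_and_le_exp
    {α : Type*} [DecidableEq α] (k m₀ : ℕ) (hk : 1 ≤ k) (hm₀ : 1 ≤ m₀)
    (S : Finset α) (B : Fin k → Finset α)
    (hS : S.card = m₀ * k)
    (hB : ∀ j, (B j).card = m₀)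
    (hdisj : ∀ i j, i ≠ j → Disjoint (B i) (B j))
    (hunion : Finset.univ.biUnion B = S)
    (p : ℝ)
    (hp : p = (((S.powersetCard k).filter
        (fun t => ∀ j, (t ∩ B j).card = 1)).card : ℝ) / ((S.powersetCard k).card : ℝ)) :
    (∑' n : ℕ, ((n : ℝ) + 1) * p * (1 - p) ^ n)
        = ((m₀ * k).choose k : ℝ) / (m₀ : ℝ) ^ k ∧
    (∑' n : ℕ, ((n : ℝ) + 1) * p * (1 - p) ^ n) ≤ Real.exp 1 ^ k := by
  classical
  have hmemS : ∀ j, ∀ a ∈ B j, a ∈ S := by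
    intro j a ha
    rw [← hunion]
    exact Finset.mem_biUnion.2 ⟨j, Finset.mem_univ j, ha⟩
  -- counting the successful subsets
  have hcount : ((S.powersetCard k).filter
      (fun t => ∀ j, (t ∩ B j).card = 1)).card = m₀ ^ k := by
    have key : (Fintype.piFinset B).card = ((S.powersetCard k).filter
        (fun t => ∀ j, (t ∩ B j).card = 1)).card := by
      apply Finset.card_bij (fun f _ => Finset.image f Finset.univ)
      · intro f hf
        rw [Fintype.mem_piFinset] at hf
        have hinj : Function.Injective f := by
          intro i j hij
          by_contra hne
          exact (Finset.disjoint_left.mp (hdisj i j hne)) (hf i) (hij ▸ hf j)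
        have hsingle : ∀ j, Finset.image f Finset.univ ∩ B j = {f j} := by
          intro j
          ext a
          simp only [Finset.mem_inter, Finset.mem_image, Finset.mem_univ, true_and,
            Finset.mem_singleton]
          constructor
          · rintro ⟨⟨i, rfl⟩, haj⟩
            by_contra hne
            have hij : i ≠ j := fun h => hne (by rw [h])
            exact (Finset.disjoint_left.mp (hdisj i j hij)) (hf i) haj
          · rintro rfl
            exact ⟨⟨j, rfl⟩, hf j⟩
        rw [Finset.mem_filter, Finset.mem_powersetCard]
        refine ⟨⟨?_, ?_⟩, ?_⟩
        · intro a ha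
          obtain ⟨i, _, rfl⟩ := Finset.mem_image.mp ha
          exact hmemS i _ (hf i)
        · rw [Finset.card_image_of_injective _ hinj, Finset.card_univ, Fintype.card_fin]
        · intro j
          rw [hsingle j, Finset.card_singleton]
      · intro f hf g hg hfg
        rw [Fintype.mem_piFinset] at hf hg
        funext j
        have : f j ∈ Finset.image g Finset.univ := by
          rw [← hfg]
          exact Finset.mem_image.mpr ⟨j, Finset.mem_univ j, rfl⟩
        obtain ⟨i, _, hij⟩ := Finset.mem_image.mp this
        have hieq : i = j := by
          by_contra hne
          exact (Finset.disjoint_left.mp (hdisj i j hne)) (hij ▸ hg i) (hf j)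
        rw [← hij, hieq]
      · intro t ht
        rw [Finset.mem_filter, Finset.mem_powersetCard] at ht
        obtain ⟨⟨htS, htk⟩, ht1⟩ := ht
        have hex : ∀ j, ∃ a, t ∩ B j = {a} := fun j => Finset.card_eq_one.mp (ht1 j)
        choose f hf using hex
        have hft : ∀ j, f j ∈ t ∩ B j := by
          intro j
          rw [hf j]
          exact Finset.mem_singleton_self _
        refine ⟨f, ?_, ?_⟩
        · rw [Fintype.mem_piFinset]
          intro j
          exact (Finset.mem_inter.mp (hft j)).2
        · ext a
          simp only [Finset.mem_image, Finset.mem_univ, true_and]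
          constructor
          · rintro ⟨j, rfl⟩
            exact (Finset.mem_inter.mp (hft j)).1
          · intro hat
            have : a ∈ Finset.univ.biUnion B := hunion ▸ htS hat
            obtain ⟨j, _, haj⟩ := Finset.mem_biUnion.mp this
            refine ⟨j, ?_⟩
            have : a ∈ t ∩ B j := Finset.mem_inter.mpr ⟨hat, haj⟩
            rw [hf j, Finset.mem_singleton] at this
            exact this.symm
    rw [← key, Fintype.card_piFinset]
    simp [hB]
  have htot : (S.powersetCard k).card = (m₀ * k).choose k := by
    rw [Finset.card_powersetCard, hS]
  have hchoose_pos : 0 < (m₀ * k).choose k :=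
    Nat.choose_pos (Nat.le_mul_of_pos_left k hm₀)
  have hple : (m₀ : ℕ) ^ k ≤ (m₀ * k).choose k := by
    rw [← hcount, ← htot]
    exact Finset.card_filter_le _ _
  have hpval : p = (m₀ : ℝ) ^ k / ((m₀ * k).choose k : ℝ) := by
    rw [hp, hcount, htot]; push_cast; ring
  have hppos : 0 < p := by
    rw [hpval]
    apply div_pos <;> positivity
  have hple1 : p ≤ 1 := by
    rw [hpval, div_le_one (by positivity)]
    exact_mod_cast hple
  -- geometric series
  have hq0 : 0 ≤ 1 - p := by linarith
  have hqlt : ‖(1 - p)‖ < 1 := by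
    rw [Real.norm_eq_abs, abs_of_nonneg hq0]; linarith
  have h1 := hasSum_coe_mul_geometric_of_norm_lt_one (𝕜 := ℝ) hqlt
  have h2 := hasSum_geometric_of_norm_lt_one hqlt
  have H := (h1.add h2).mul_left p
  have hfun : (fun n : ℕ => p * ((n : ℝ) * (1 - p) ^ n + (1 - p) ^ n))
      = fun n : ℕ => ((n : ℝ) + 1) * p * (1 - p) ^ n := by
    funext n; ring
  rw [hfun] at H
  have hsum : (∑' n : ℕ, ((n : ℝ) + 1) * p * (1 - p) ^ n) = 1 / p := by
    rw [H.tsum_eq]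
    have hpp : 1 - (1 - p) = p := by ring
    rw [hpp]
    have hne : p ≠ 0 := ne_of_gt hppos
    field_simp
    ring
  have heq : (∑' n : ℕ, ((n : ℝ) + 1) * p * (1 - p) ^ n)
      = ((m₀ * k).choose k : ℝ) / (m₀ : ℝ) ^ k := by
    rw [hsum, hpval, one_div_div]
  refine ⟨heq, ?_⟩
  rw [heq]
  -- the bound C(m₀k, k)/m₀^k ≤ e^k
  have h4 : ((m₀ * k).choose k : ℝ) ≤ ((m₀ * k : ℕ) : ℝ) ^ k / (k.factorial : ℝ) :=
    Nat.choose_le_pow_div k (m₀ * k)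
  have hm0pos : (0 : ℝ) < (m₀ : ℝ) ^ k := by positivity
  have h5 : ((m₀ * k).choose k : ℝ) / (m₀ : ℝ) ^ k
      ≤ (k : ℝ) ^ k / (k.factorial : ℝ) := by
    calc ((m₀ * k).choose k : ℝ) / (m₀ : ℝ) ^ k
        ≤ (((m₀ * k : ℕ) : ℝ) ^ k / (k.factorial : ℝ)) / (m₀ : ℝ) ^ k := by gcongr
      _ = (k : ℝ) ^ k / (k.factorial : ℝ) := by
          push_cast
          rw [mul_pow]
          field_simp
  have h6 : (k : ℝ) ^ k / (k.factorial : ℝ) ≤ Real.exp k :=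
    Real.pow_div_factorial_le_exp (k : ℝ) (Nat.cast_nonneg k) k
  have h7 : Real.exp (k : ℝ) = Real.exp 1 ^ k := by
    rw [← Real.exp_nat_mul, mul_one]
  linarith
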